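/- Let n ≥ 2 be an integer, t ≥ 3 an odd integer dividing 2n, and s an integer with 0 ≤ s ≤ t − 1, and let x, y be the standard generators of the generalized quaternion group Q_{4n}. Then the subgroup ⟨x^t, x^s y⟩ is a perfect code in the Cayley graph Cay(Q_{4n}, S), where S = {x^i, x^{-i} : 1 ≤ i ≤ (t−1)/2}. -/

import Mathlib

/-- The Cayley graph of a group `G` with connection set `S`: distinct vertices `x`, `y`
are adjacent iff `y * x⁻¹ ∈ S` (for inverse-closed `S` this relation is symmetric). -/
def cayley (G : Type*) [Group G] (S : Set G) : SimpleGraph G :=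
  SimpleGraph.fromRel (fun x y => y * x⁻¹ ∈ S)

/-- `C` is a perfect code in the graph `Γ`: `C` is an independent set and every vertex
outside `C` is adjacent to exactly one vertex of `C`. -/
def IsPerfectCode {V : Type*} (Γ : SimpleGraph V) (C : Set V) : Prop :=
  (∀ u ∈ C, ∀ v ∈ C, ¬ Γ.Adj u v) ∧ ∀ v ∉ C, ∃! u, u ∈ C ∧ Γ.Adj v u

/-- `C` is a perfect code of the group `G`: there is an inverse-closed `S ⊆ G` with
`1 ∉ S` such that `C` is a perfect code in `Cay(G, S)`. -/
def IsPerfectCodeOfGroup (G : Type*) [Group G] (C : Set G) : Prop :=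
  ∃ S : Set G, S⁻¹ = S ∧ (1 : G) ∉ S ∧ IsPerfectCode (cayley G S) C

namespace QPC
open QuaternionGroup

theorem inv_a {n : ℕ} (i : ZMod (2*n)) : (a i : QuaternionGroup n)⁻¹ = a (-i) := rfl

theorem inv_xa {n : ℕ} (i : ZMod (2*n)) : (xa i : QuaternionGroup n)⁻¹ = xa ((n : ZMod (2*n)) + i) := rfl

/-- small integers are determined by their residue mod t -/
theorem small_inj {t : ℕ} {j j' : ℤ} (hj : 2 * j.natAbs < t)
    (hj' : 2 * j'.natAbs < t) (h : (j : ZMod t) = (j' : ZMod t)) : j = j' := by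
  rw [ZMod.intCast_eq_intCast_iff] at h
  obtain ⟨k, hk⟩ := h.dvd
  have h1 : (j' - j).natAbs = t * k.natAbs := by rw [hk, Int.natAbs_mul, Int.natAbs_natCast]
  have h2 : (j' - j).natAbs ≤ j'.natAbs + j.natAbs := by
    simpa using Int.natAbs_sub_le j' j
  have hk0 : k.natAbs = 0 := by
    by_contra hne
    have : t * 1 ≤ t * k.natAbs := Nat.mul_le_mul_left t (by omega)
    omega
  have : k = 0 := Int.natAbs_eq_zero.mp hk0
  rw [this, mul_zero] at hk
  omega

theorem exists_small {t : ℕ} (ht : 3 ≤ t) (htodd : Odd t) (r : ZMod t) (hr : r ≠ 0) :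
    ∃ j : ℤ, j ≠ 0 ∧ 2 * j.natAbs < t ∧ (j : ZMod t) = r := by
  haveI : NeZero t := ⟨by omega⟩
  set v := r.val with hv
  have hvt : v < t := ZMod.val_lt r
  have hv0 : v ≠ 0 := by
    intro h0
    apply hr
    have := ZMod.natCast_rightInverse (n := t) r
    rw [← this, hv] at *
    rw [h0] at this ⊢
    simpa using this.symm
  have hcast : ((v : ℤ) : ZMod t) = r := by
    push_cast
    exact ZMod.natCast_rightInverse r
  obtain ⟨m, hm⟩ := htodd
  by_cases hsmall : 2 * v < t
  · exact ⟨(v : ℤ), by exact_mod_cast hv0 ∘ fun h => by omega, by simpa using hsmall, hcast⟩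
  · refine ⟨(v : ℤ) - t, by omega, ?_, ?_⟩
    · have : ((v:ℤ) - t).natAbs = t - v := by omega
      omega
    · push_cast
      simp only [ZMod.natCast_self, sub_zero]
      exact_mod_cast hcast

variable {n t s : ℕ}

def pi (htdvd : t ∣ 2*n) (s : ℕ) : QuaternionGroup n → ZMod t
  | a i => ZMod.castHom htdvd (ZMod t) i
  | xa i => ZMod.castHom htdvd (ZMod t) i + s

@[simp] theorem pi_a (htdvd : t ∣ 2*n) (i : ZMod (2*n)) :
    pi htdvd s (a i) = ZMod.castHom htdvd (ZMod t) i := rfl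

@[simp] theorem pi_xa (htdvd : t ∣ 2*n) (i : ZMod (2*n)) :
    pi htdvd s (xa i) = ZMod.castHom htdvd (ZMod t) i + s := rfl

theorem mem_closure_iff (hn : n ≠ 0) (htdvd : t ∣ 2*n) (hn0 : ((n : ℕ) : ZMod t) = 0)
    (g : QuaternionGroup n) :
    g ∈ Subgroup.closure {(a 1 : QuaternionGroup n) ^ t, (a 1 : QuaternionGroup n) ^ s * xa 0} ↔
      pi htdvd s g = 0 := by
  haveI : NeZero (2*n) := ⟨by omega⟩
  set c := ZMod.castHom htdvd (ZMod t) with hc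
  have hcv : ∀ i : ZMod (2*n), c i = ((i.val : ℕ) : ZMod t) := fun i => by
    rw [ZMod.castHom_apply, ZMod.natCast_val]
  constructor
  · intro hg
    induction hg using Subgroup.closure_induction with
    | mem g hg =>
      rcases hg with rfl | rfl
      · simp [a_one_pow]
      · simp only [a_one_pow, a_mul_xa, pi_xa, zero_sub, map_neg, map_natCast, ← hc]
        ring
    | one => rw [one_def, pi_a, map_zero]
    | mul u v hu hv hu' hv' =>
      rcases u with i | i <;> rcases v with j | j <;>
        simp only [a_mul_a, a_mul_xa, xa_mul_a, xa_mul_xa, pi_a, pi_xa, map_add, map_sub,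
          map_natCast, ← hc] at hu' hv' ⊢
      · linear_combination hu' + hv'
      · linear_combination hv' - hu'
      · linear_combination hu' + hv'
      · linear_combination hn0 + hv' - hu'
    | inv u hu hu' =>
      rcases u with i | i <;>
        simp only [inv_a, inv_xa, pi_a, pi_xa, map_add, map_neg, map_natCast, ← hc] at hu' ⊢
      · linear_combination -hu'
      · linear_combination hn0 + hu'
  · intro hg
    rcases g with i | i
    · simp only [pi_a, ← hc] at hg
      rw [hcv] at hg
      obtain ⟨k, hk⟩ := (ZMod.natCast_eq_zero_iff _ _).mp hg
      have hi : a i = ((a 1 : QuaternionGroup n) ^ t) ^ k := by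
        rw [← pow_mul, a_one_pow, ← hk, ZMod.natCast_val, ZMod.cast_id]
      rw [hi]
      exact pow_mem (Subgroup.subset_closure (by simp)) k
    · simp only [pi_xa, ← hc] at hg
      have hg' : c (i + (s : ZMod (2*n))) = 0 := by
        rw [map_add, map_natCast]; linear_combination hg
      rw [hcv] at hg'
      obtain ⟨k, hk⟩ := (ZMod.natCast_eq_zero_iff _ _).mp hg'
      have hw : ((a 1 : QuaternionGroup n) ^ t) ^ k = a (i + (s : ZMod (2*n))) := by
        rw [← pow_mul, a_one_pow, ← hk, ZMod.natCast_val, ZMod.cast_id]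
      have hx : xa i = (((a 1 : QuaternionGroup n) ^ t) ^ k)⁻¹ *
          ((a 1 : QuaternionGroup n) ^ s * xa 0) := by
        rw [hw, a_one_pow, inv_a, a_mul_xa, a_mul_xa]
        congr 1
        ring
      rw [hx]
      exact mul_mem (inv_mem (pow_mem (Subgroup.subset_closure (by simp)) k))
        (Subgroup.subset_closure (by simp))

theorem aux (n t s : ℕ) (hn : 2 ≤ n) (ht : 3 ≤ t) (htodd : Odd t) (htdvd : t ∣ 2 * n)
    (hs : s ≤ t - 1) :
    IsPerfectCode (cayley (QuaternionGroup n)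
        {g | ∃ i : ℕ, 1 ≤ i ∧ i ≤ (t - 1) / 2 ∧
          (g = (a 1 : QuaternionGroup n) ^ i ∨ g = ((a 1 : QuaternionGroup n) ^ i)⁻¹)})
      ((Subgroup.closure
          {(a 1 : QuaternionGroup n) ^ t, (a 1 : QuaternionGroup n) ^ s * xa 0}) :
        Set (QuaternionGroup n)) := by
  haveI : NeZero (2 * n) := ⟨by omega⟩
  haveI : NeZero t := ⟨by omega⟩
  obtain ⟨mo, hmo⟩ := htodd
  have htn : t ∣ n := by
    have hcop : Nat.Coprime t 2 := by
      rw [Nat.coprime_comm]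
      exact (Nat.prime_two.coprime_iff_not_dvd).mpr (by omega)
    exact hcop.dvd_of_dvd_mul_left htdvd
  have hn0 : ((n : ℕ) : ZMod t) = 0 := (ZMod.natCast_eq_zero_iff _ _).mpr htn
  have h2n : ((n : ZMod (2*n)) + n) = 0 := by
    have h := ZMod.natCast_self (2*n)
    push_cast at h
    linear_combination h
  set c := ZMod.castHom htdvd (ZMod t) with hc
  set S : Set (QuaternionGroup n) := {g | ∃ i : ℕ, 1 ≤ i ∧ i ≤ (t - 1) / 2 ∧
      (g = (a 1 : QuaternionGroup n) ^ i ∨ g = ((a 1 : QuaternionGroup n) ^ i)⁻¹)} with hSdef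
  have hS : ∀ g, g ∈ S ↔ ∃ j : ℤ, j ≠ 0 ∧ 2 * j.natAbs < t ∧ g = a ((j : ZMod (2*n))) := by
    intro g
    constructor
    · rintro ⟨i, h1, h2, rfl | rfl⟩
      · refine ⟨(i : ℤ), Int.natCast_ne_zero.mpr (by omega), ?_, ?_⟩
        · simp only [Int.natAbs_natCast]; omega
        · rw [a_one_pow]; norm_cast
      · refine ⟨-(i : ℤ), ?_, ?_, ?_⟩
        · simp; omega
        · simp only [Int.natAbs_neg, Int.natAbs_natCast]; omega
        · rw [a_one_pow, inv_a]; push_cast; ring_nf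
    · rintro ⟨j, hj0, hjt, rfl⟩
      rcases le_or_gt 0 j with hj | hj
      · refine ⟨j.natAbs, by omega, by omega, Or.inl ?_⟩
        rw [a_one_pow]
        congr 1
        rw [show ((j.natAbs : ℕ) : ZMod (2*n)) = ((j.natAbs : ℤ) : ZMod (2*n)) from (Int.cast_natCast _).symm,
          Int.natAbs_of_nonneg hj]
      · refine ⟨j.natAbs, by omega, by omega, Or.inr ?_⟩
        rw [a_one_pow, inv_a]
        congr 1
        have hna : ((j.natAbs : ℤ)) = -j := by omega
        rw [show ((j.natAbs : ℕ) : ZMod (2*n)) = ((j.natAbs : ℤ) : ZMod (2*n)) from (Int.cast_natCast _).symm,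
          hna]
        push_cast
        ring
  have hSa : ∀ d : ZMod (2*n), a d ∈ S → c d ≠ 0 := by
    intro d hd h0
    obtain ⟨j, hj0, hjt, heq⟩ := (hS _).mp hd
    have hdj : d = (j : ZMod (2*n)) := by
      simpa only [a.injEq] using heq
    apply hj0
    refine small_inj (t := t) hjt (by simp only [Int.natAbs_zero, mul_zero]; omega) ?_
    rw [Int.cast_zero]
    rw [hdj, map_intCast] at h0
    exact h0
  have hSxa : ∀ d : ZMod (2*n), xa d ∉ S := by
    intro d hd
    obtain ⟨j, -, -, heq⟩ := (hS _).mp hd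
    simp at heq
  have hadj : ∀ u v : QuaternionGroup n, (cayley (QuaternionGroup n) S).Adj v u ↔
      u * v⁻¹ ∈ S := by
    intro u v
    rw [cayley, SimpleGraph.fromRel_adj]
    constructor
    · rintro ⟨hne, h | h⟩
      · exact h
      · obtain ⟨j, hj0, hjt, hju⟩ := (hS _).mp h
        have huv : u * v⁻¹ = a ((- j : ℤ) : ZMod (2*n)) := by
          have : u * v⁻¹ = (v * u⁻¹)⁻¹ := by group
          rw [this, hju, inv_a]
          push_cast
          ring_nf
        rw [huv]
        exact (hS _).mpr ⟨-j, by omega, by simpa using hjt, rfl⟩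
    · intro h
      refine ⟨?_, Or.inl h⟩
      rintro rfl
      rw [mul_inv_cancel] at h
      exact hSa 0 (by rwa [← one_def]) (map_zero c)
  have hmem : ∀ g : QuaternionGroup n,
      g ∈ ((Subgroup.closure
        {(a 1 : QuaternionGroup n) ^ t, (a 1 : QuaternionGroup n) ^ s * xa 0}) :
          Set (QuaternionGroup n)) ↔ pi htdvd s g = 0 := by
    intro g
    rw [SetLike.mem_coe]
    exact mem_closure_iff (by omega) htdvd hn0 g
  constructor
  · -- independence
    intro u hu v hv hA
    have hu' := (hmem u).mp hu
    have hv' := (hmem v).mp hv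
    have hA' : v * u⁻¹ ∈ S := (hadj v u).mp hA
    rcases u with i | i <;> rcases v with j | j <;>
      simp only [pi_a, pi_xa, ← hc] at hu' hv' <;>
      simp only [inv_a, inv_xa, a_mul_a, a_mul_xa, xa_mul_a, xa_mul_xa] at hA'
    · exact hSa _ hA' (by rw [map_add, map_neg]; linear_combination hv' - hu')
    · exact hSxa _ hA'
    · exact hSxa _ hA'
    · exact hSa _ hA' (by
        rw [map_sub, map_add, map_add, map_natCast]
        linear_combination 2 * hn0 + hu' - hv')
  · -- unique neighbour
    intro v hv
    rcases v with i | i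
    · have hi : c i ≠ 0 := by
        intro h0
        exact hv ((hmem _).mpr (by simpa only [pi_a, ← hc] using h0))
      obtain ⟨j, hj0, hjt, hjr⟩ := exists_small ht ⟨mo, hmo⟩ (- c i) (neg_ne_zero.mpr hi)
      refine ⟨a ((j : ZMod (2*n)) + i), ⟨?_, ?_⟩, ?_⟩
      · refine (hmem _).mpr ?_
        simp only [pi_a, ← hc, map_add, map_intCast]
        linear_combination hjr
      · refine (hadj _ _).mpr ?_
        rw [inv_a, a_mul_a]
        rw [show ((j : ZMod (2*n)) + i + -i) = (j : ZMod (2*n)) by ring]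
        exact (hS _).mpr ⟨j, hj0, hjt, rfl⟩
      · rintro (m | m) ⟨hu', hA'⟩
        · rw [hadj] at hA'
          rw [inv_a, a_mul_a] at hA'
          obtain ⟨j', hj'0, hj't, heq⟩ := (hS _).mp hA'
          have heq' : m + -i = ((j' : ℤ) : ZMod (2*n)) := by simpa only [a.injEq] using heq
          have hm' := (hmem _).mp hu'
          simp only [pi_a, ← hc] at hm'
          have hcast : ((j' : ℤ) : ZMod t) = ((j : ℤ) : ZMod t) := by
            have := congrArg c heq'
            rw [map_add, map_neg, map_intCast, hm'] at this
            rw [← this, hjr]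
            ring
          have : j' = j := small_inj hj't hjt hcast
          subst this
          have : m = (j' : ZMod (2*n)) + i := by linear_combination heq'
          rw [this]
        · rw [hadj] at hA'
          rw [inv_a, xa_mul_a] at hA'
          exact absurd hA' (hSxa _)
    · have hi : c i + (s : ZMod t) ≠ 0 := by
        intro h0
        exact hv ((hmem _).mpr (by simpa only [pi_xa, ← hc] using h0))
      obtain ⟨j, hj0, hjt, hjr⟩ := exists_small ht ⟨mo, hmo⟩ (c i + s) hi
      refine ⟨xa (i - (j : ZMod (2*n))), ⟨?_, ?_⟩, ?_⟩
      · refine (hmem _).mpr ?_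
        simp only [pi_xa, ← hc, map_sub, map_intCast]
        linear_combination -hjr
      · refine (hadj _ _).mpr ?_
        rw [inv_xa, xa_mul_xa]
        rw [show ((n : ZMod (2*n)) + ((n : ZMod (2*n)) + i) - (i - (j : ZMod (2*n))))
            = (j : ZMod (2*n)) by linear_combination h2n]
        exact (hS _).mpr ⟨j, hj0, hjt, rfl⟩
      · rintro (m | m) ⟨hu', hA'⟩
        · rw [hadj] at hA'
          rw [inv_xa, a_mul_xa] at hA'
          exact absurd hA' (hSxa _)
        · rw [hadj] at hA'
          rw [inv_xa, xa_mul_xa] at hA'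
          obtain ⟨j', hj'0, hj't, heq⟩ := (hS _).mp hA'
          have heq' : (n : ZMod (2*n)) + ((n : ZMod (2*n)) + i) - m = ((j' : ℤ) : ZMod (2*n)) := by
            simpa only [a.injEq] using heq
          have hm' := (hmem _).mp hu'
          simp only [pi_xa, ← hc] at hm'
          have hcast : ((j' : ℤ) : ZMod t) = ((j : ℤ) : ZMod t) := by
            have := congrArg c heq'
            rw [map_sub, map_add, map_add, map_natCast, map_intCast] at this
            rw [← this, hjr]
            linear_combination 2 * hn0 - hm'
          have : j' = j := small_inj hj't hjt hcast
          subst this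
          have : m = i - (j' : ZMod (2*n)) := by linear_combination h2n - heq'
          rw [this]

end QPC

/-- In `Q_{4n}` (`n ≥ 2`), for odd `t ≥ 3` dividing `2n` and `0 ≤ s ≤ t - 1`, the
subgroup `⟨x^t, x^s y⟩` is a perfect code in `Cay(Q_{4n}, S)` where
`S = {x^i, x^{-i} : 1 ≤ i ≤ (t-1)/2}`. -/
theorem quaternion_dicyclic_subgroup_perfect_code_explicit (n : ℕ) (hn : 2 ≤ n)
    (t : ℕ) (ht : 3 ≤ t) (htodd : Odd t) (htdvd : t ∣ 2 * n) (s : ℕ) (hs : s ≤ t - 1) :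
    letI x : QuaternionGroup n := QuaternionGroup.a (1 : ZMod (2 * n))
    letI y : QuaternionGroup n := QuaternionGroup.xa (0 : ZMod (2 * n))
    letI S : Set (QuaternionGroup n) :=
      {g | ∃ i : ℕ, 1 ≤ i ∧ i ≤ (t - 1) / 2 ∧ (g = x ^ i ∨ g = (x ^ i)⁻¹)}
    IsPerfectCode (cayley (QuaternionGroup n) S)
      ((Subgroup.closure {x ^ t, x ^ s * y}) : Set (QuaternionGroup n)) := by
  exact QPC.aux n t s hn ht htodd htdvd hs
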